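/- Let P(z) = Σ_{j=0}^m A_j z^j be a matrix polynomial of degree m with A_m invertible, and let t > 0 satisfy ‖A_m^{-1}‖^{-1} ≥ t‖A_{m-1}‖ ≥ t²‖A_{m-2}‖ ≥ ... ≥ t^m‖A_0‖ with A_0 positive definite. Then every eigenvalue λ of P satisfies |λ| ≤ k₁/t, where k₁ is the greatest positive root of K^{m+1} − 2K^m + 1 = 0. -/

import Mathlib

open scoped ComplexOrder

/-- Operator norm of a complex matrix, subordinate to the Euclidean vector norm. -/
noncomputable def opNorm {n : ℕ} (A : Matrix (Fin n) (Fin n) ℂ) : ℝ :=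
  ‖Matrix.toEuclideanCLM (𝕜 := ℂ) A‖

lemma sum_mulVec' {n : ℕ} (s : Finset ℕ) (C : ℕ → Matrix (Fin n) (Fin n) ℂ)
    (u : Fin n → ℂ) : (∑ j ∈ s, C j).mulVec u = ∑ j ∈ s, (C j).mulVec u := by
  classical
  induction s using Finset.induction with
  | empty => simp
  | insert _ _ h ih => rw [Finset.sum_insert h, Finset.sum_insert h, Matrix.add_mulVec, ih]

/-- Scalar lemma: if `K ≥ 0` and `K^m ≤ ∑_{j<m} K^j`, then `K ≤ k₁`. -/
lemma scalar_bound (m : ℕ) (K : ℝ) (hK : 0 ≤ K)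
    (hsum : K ^ m ≤ ∑ j ∈ Finset.range m, K ^ j)
    (k₁ : ℝ) (hk₁max : ∀ x : ℝ, 0 < x → x ^ (m + 1) - 2 * x ^ m + 1 = 0 → x ≤ k₁) :
    K ≤ k₁ := by
  have h1 : (1 : ℝ) ≤ k₁ := hk₁max 1 one_pos (by ring)
  rcases le_or_gt K 1 with h | h
  · linarith
  · -- K > 1 : geometric sum
    have hne : K ≠ 1 := ne_of_gt h
    have hgeom : ∑ j ∈ Finset.range m, K ^ j = (K ^ m - 1) / (K - 1) := geom_sum_eq hne m
    have hKm1 : 0 < K - 1 := by linarith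
    have hfK : K ^ (m + 1) - 2 * K ^ m + 1 ≤ 0 := by
      rw [hgeom] at hsum
      have h2 := (le_div_iff₀ hKm1).mp hsum
      have h3 : K ^ (m + 1) = K ^ m * K := pow_succ K m
      nlinarith [h2, h3]
    -- IVT on [K, max K 2]
    set b := max K 2 with hb
    have hKb : K ≤ b := le_max_left _ _
    have hb2 : (2 : ℝ) ≤ b := le_max_right _ _
    have hfb : 0 ≤ b ^ (m + 1) - 2 * b ^ m + 1 := by
      have hbm : 0 ≤ b ^ m := by positivity
      have : b ^ (m + 1) - 2 * b ^ m + 1 = b ^ m * (b - 2) + 1 := by ring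
      nlinarith
    have hcont : ContinuousOn (fun x : ℝ => x ^ (m + 1) - 2 * x ^ m + 1) (Set.Icc K b) := by
      fun_prop
    have hmem : (0 : ℝ) ∈ Set.Icc ((fun x : ℝ => x ^ (m + 1) - 2 * x ^ m + 1) K)
        ((fun x : ℝ => x ^ (m + 1) - 2 * x ^ m + 1) b) := ⟨hfK, hfb⟩
    obtain ⟨c, hc, hfc⟩ := intermediate_value_Icc hKb hcont hmem
    have hcpos : 0 < c := lt_of_lt_of_le (by linarith) hc.1
    exact le_trans hc.1 (hk₁max c hcpos hfc)

theorem matrixPoly_eigenvalue_bound_trinomial {n : ℕ} (m : ℕ) (hm : 0 < m)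
    (A : ℕ → Matrix (Fin n) (Fin n) ℂ) (hA : IsUnit (A m).det)
    (t : ℝ) (ht : 0 < t)
    (htop : t * opNorm (A (m - 1)) ≤ (opNorm (A m)⁻¹)⁻¹)
    (hchain : ∀ j, j + 1 < m →
        t ^ (m - j) * opNorm (A j) ≤ t ^ (m - (j + 1)) * opNorm (A (j + 1)))
    (h0 : (A 0).PosDef)
    (k₁ : ℝ) (hk₁pos : 0 < k₁)
    (hk₁root : k₁ ^ (m + 1) - 2 * k₁ ^ m + 1 = 0)
    (hk₁max : ∀ x : ℝ, 0 < x → x ^ (m + 1) - 2 * x ^ m + 1 = 0 → x ≤ k₁)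
    (lam : ℂ) (u : Fin n → ℂ) (hu : u ≠ 0)
    (hlam : (∑ j ∈ Finset.range (m + 1), lam ^ j • A j).mulVec u = 0) :
    ‖lam‖ ≤ k₁ / t := by
  classical
  set f : Matrix (Fin n) (Fin n) ℂ → (EuclideanSpace ℂ (Fin n) →L[ℂ] EuclideanSpace ℂ (Fin n)) :=
    fun B => Matrix.toEuclideanCLM (𝕜 := ℂ) B with hfdef
  set v : EuclideanSpace ℂ (Fin n) := (WithLp.equiv 2 (Fin n → ℂ)).symm u with hvdef
  have hv : v ≠ 0 := by
    intro h
    apply hu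
    have := congrArg (WithLp.equiv 2 (Fin n → ℂ)) h
    simpa [hvdef] using this
  have hvpos : 0 < ‖v‖ := norm_pos_iff.mpr hv
  -- the vector equation in Euclidean space
  have key : ∑ j ∈ Finset.range (m + 1), lam ^ j • (f (A j)) v = 0 := by
    have : ∀ j, (f (A j)) v = (WithLp.equiv 2 (Fin n → ℂ)).symm ((A j).mulVec u) := by
      intro j
      simp [hfdef, hvdef, Matrix.toEuclideanCLM_toLp, Matrix.toLin'_apply]
    simp only [this]
    have hL := (WithLp.linearEquiv 2 ℂ (Fin n → ℂ)).symm
    calc ∑ j ∈ Finset.range (m + 1),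
          lam ^ j • (WithLp.linearEquiv 2 ℂ (Fin n → ℂ)).symm ((A j).mulVec u)
        = (WithLp.linearEquiv 2 ℂ (Fin n → ℂ)).symm
            (∑ j ∈ Finset.range (m + 1), lam ^ j • (A j).mulVec u) := by
          rw [map_sum]; simp only [map_smul]
      _ = 0 := by
          rw [show (∑ j ∈ Finset.range (m + 1), lam ^ j • (A j).mulVec u) = 0 from ?_, map_zero]
          rw [← hlam]
          rw [sum_mulVec']
          exact Finset.sum_congr rfl fun j _ => (Matrix.smul_mulVec _ _ _).symm
  rw [Finset.sum_range_succ] at key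
  have keq : lam ^ m • (f (A m)) v = -∑ j ∈ Finset.range m, lam ^ j • (f (A j)) v := by
    linear_combination (norm := module) key
  -- lower bound on ‖f (A m) v‖
  have hinv : (f ((A m)⁻¹)) ((f (A m)) v) = v := by
    have : f ((A m)⁻¹) * f (A m) = 1 := by
      rw [hfdef]
      simp only
      rw [← map_mul, Matrix.nonsing_inv_mul _ hA, map_one]
    calc (f ((A m)⁻¹)) ((f (A m)) v) = (f ((A m)⁻¹) * f (A m)) v := rfl
      _ = v := by rw [this]; rfl
  have hlow : ‖v‖ ≤ opNorm ((A m)⁻¹) * ‖(f (A m)) v‖ := by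
    calc ‖v‖ = ‖(f ((A m)⁻¹)) ((f (A m)) v)‖ := by rw [hinv]
      _ ≤ ‖f ((A m)⁻¹)‖ * ‖(f (A m)) v‖ := ContinuousLinearMap.le_opNorm _ _
      _ = opNorm ((A m)⁻¹) * ‖(f (A m)) v‖ := rfl
  have hNpos : 0 < opNorm ((A m)⁻¹) := by
    by_contra h
    push_neg at h
    have h2 : opNorm ((A m)⁻¹) * ‖(f (A m)) v‖ ≤ 0 :=
      mul_nonpos_of_nonpos_of_nonneg h (norm_nonneg _)
    linarith
  set M := (opNorm ((A m)⁻¹))⁻¹ with hMdef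
  have hMpos : 0 < M := inv_pos.mpr hNpos
  have hlow' : M * ‖v‖ ≤ ‖(f (A m)) v‖ := by
    rw [hMdef, inv_mul_le_iff₀ hNpos] at *
    linarith [hlow]
  -- chain bound: for j < m, t^(m-j) * opNorm (A j) ≤ M
  have hchain' : ∀ j, j < m → t ^ (m - j) * opNorm (A j) ≤ M := by
    have haux : ∀ i, ∀ j, j + i = m - 1 →
        t ^ (m - j) * opNorm (A j) ≤ t ^ (m - (m-1)) * opNorm (A (m - 1)) := by
      intro i
      induction i with
      | zero => intro j hj; rw [show j = m - 1 by omega]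
      | succ i ih =>
        intro j hj
        have h1 : j + 1 < m := by omega
        calc t ^ (m - j) * opNorm (A j) ≤ t ^ (m - (j+1)) * opNorm (A (j+1)) := hchain j h1
          _ ≤ t ^ (m - (m-1)) * opNorm (A (m-1)) := ih (j+1) (by omega)
      done
    intro j hj
    have h1 : m - (m - 1) = 1 := by omega
    have h2 := haux (m - 1 - j) j (by omega)
    rw [h1, pow_one] at h2
    exact h2.trans htop
  have hAj : ∀ j, j < m → opNorm (A j) ≤ M * t ^ j / t ^ m := by
    intro j hj
    have h2 := hchain' j hj
    rw [le_div_iff₀ (pow_pos ht m)]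
    have h4 := mul_le_mul_of_nonneg_right h2 (le_of_lt (pow_pos ht j))
    have h5 : t ^ (m - j) * t ^ j = t ^ m := by
      rw [← pow_add]; congr 1; omega
    have h6 : opNorm (A j) * t ^ m = t ^ (m - j) * opNorm (A j) * t ^ j := by
      rw [← h5]; ring
    linarith [h4, h6]
  -- norm inequality
  set r := ‖lam‖ with hrdef
  have hr0 : 0 ≤ r := norm_nonneg _
  have hmain : r ^ m * (M * ‖v‖) ≤
      (∑ j ∈ Finset.range m, (t * r) ^ j) * (M * ‖v‖ / t ^ m) := by
    have hLHS : r ^ m * (M * ‖v‖) ≤ ‖lam ^ m • (f (A m)) v‖ := by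
      rw [norm_smul, norm_pow]
      exact mul_le_mul_of_nonneg_left hlow' (by positivity)
    have hRHS : ‖∑ j ∈ Finset.range m, lam ^ j • (f (A j)) v‖ ≤
        ∑ j ∈ Finset.range m, r ^ j * (M * t ^ j / t ^ m * ‖v‖) := by
      refine (norm_sum_le _ _).trans (Finset.sum_le_sum fun j hj => ?_)
      rw [norm_smul, norm_pow]
      have h1 : ‖(f (A j)) v‖ ≤ opNorm (A j) * ‖v‖ := ContinuousLinearMap.le_opNorm _ _
      have h2 : opNorm (A j) * ‖v‖ ≤ M * t ^ j / t ^ m * ‖v‖ :=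
        mul_le_mul_of_nonneg_right (hAj j (Finset.mem_range.mp hj)) (norm_nonneg _)
      have h3 : (0:ℝ) ≤ r ^ j := by positivity
      calc r ^ j * ‖(f (A j)) v‖ ≤ r ^ j * (opNorm (A j) * ‖v‖) :=
            mul_le_mul_of_nonneg_left h1 h3
        _ ≤ r ^ j * (M * t ^ j / t ^ m * ‖v‖) := mul_le_mul_of_nonneg_left h2 h3
    have heqnorm : ‖lam ^ m • (f (A m)) v‖ =
        ‖∑ j ∈ Finset.range m, lam ^ j • (f (A j)) v‖ := by
      rw [keq, norm_neg]
    calc r ^ m * (M * ‖v‖) ≤ ‖lam ^ m • (f (A m)) v‖ := hLHS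
      _ ≤ ∑ j ∈ Finset.range m, r ^ j * (M * t ^ j / t ^ m * ‖v‖) := by
          rw [heqnorm]; exact hRHS
      _ = (∑ j ∈ Finset.range m, (t * r) ^ j) * (M * ‖v‖ / t ^ m) := by
          rw [Finset.sum_mul]
          refine Finset.sum_congr rfl fun j _ => ?_
          rw [mul_pow]; ring
  -- reduce to scalar inequality
  have hK : (t * r) ^ m ≤ ∑ j ∈ Finset.range m, (t * r) ^ j := by
    have htm : 0 < t ^ m := pow_pos ht m
    have hMv : 0 < M * ‖v‖ := mul_pos hMpos hvpos
    have h1 : r ^ m * (M * ‖v‖) * t ^ m ≤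
        (∑ j ∈ Finset.range m, (t * r) ^ j) * (M * ‖v‖) := by
      have := mul_le_mul_of_nonneg_right hmain (le_of_lt htm)
      calc r ^ m * (M * ‖v‖) * t ^ m
          ≤ (∑ j ∈ Finset.range m, (t * r) ^ j) * (M * ‖v‖ / t ^ m) * t ^ m := this
        _ = (∑ j ∈ Finset.range m, (t * r) ^ j) * (M * ‖v‖) := by field_simp
    have h2 : (t * r) ^ m * (M * ‖v‖) ≤
        (∑ j ∈ Finset.range m, (t * r) ^ j) * (M * ‖v‖) := by
      rw [mul_pow]
      calc t ^ m * r ^ m * (M * ‖v‖) = r ^ m * (M * ‖v‖) * t ^ m := by ring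
        _ ≤ _ := h1
    exact le_of_mul_le_mul_right h2 hMv
  have hfin : t * r ≤ k₁ := scalar_bound m (t * r) (by positivity) hK k₁ hk₁max
  rw [le_div_iff₀ ht]
  linarith [hfin]
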